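/- Word order with weights is noetherian: Let L be a finite set and Λ a finite abelian group, Σ = L × Λ. For words x : [n] → Σ and y : [m] → Σ, define x ≤ y if there exists an ordered surjection f : [m] → [n] (meaning i < j implies min f^{-1}(i) < min f^{-1}(j)) such that the L-component of y equals the pullback along f of the L-component of x, and for each i ∈ [n], the Λ-component of x at i equals the sum over f^{-1}(i) of the Λ-component of y. Then (Σ^*, ≤) is a noetherian poset (well-quasi-order). -/

import Mathlib

/-- The weighted subword order on words over `Σ = L × Λ`: `x ≤ y` iff there is an
ordered surjection `f : [len y] → [len x]` (for `i < j`, `min f⁻¹(i) < min f⁻¹(j)`)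
such that the `L`-component of `y` is the pullback along `f` of that of `x`, and the
`Λ`-component of `x` at each `i` is the sum of the `Λ`-components of `y` over the
fiber `f⁻¹(i)`. -/
def WeightedWordLE {L Λ : Type*} [AddCommMonoid Λ] (x y : List (L × Λ)) : Prop :=
  ∃ f : Fin y.length → Fin x.length,
    Function.Surjective f ∧
    (∀ i j : Fin x.length, i < j →
      ∃ b : Fin y.length, f b = i ∧ ∀ a : Fin y.length, f a = j → b < a) ∧
    (∀ a : Fin y.length, (y.get a).1 = (x.get (f a)).1) ∧
    (∀ i : Fin x.length,
      (x.get i).2 = ∑ a ∈ Finset.univ.filter (fun a => f a = i), (y.get a).2)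

section Aux

variable {L Λ : Type*} [AddCommGroup Λ]

/-- `k` is a leader in `w` if its `L`-label does not occur earlier. -/
def WWIsLeader (w : List (L × Λ)) (k : Fin w.length) : Prop :=
  ∀ j : Fin w.length, j < k → (w.get j).1 ≠ (w.get k).1

/-- The word with each letter decorated by its leader flag. -/
noncomputable def wwFlag (w : List (L × Λ)) : List ((L × Λ) × Prop) :=
  List.ofFn (fun k : Fin w.length => (w.get k, WWIsLeader w k))

open Classical in
/-- Total weight of letters with a given label. -/
noncomputable def wwSum (w : List (L × Λ)) (ℓ : L) : Λ :=
  ∑ k : Fin w.length, if (w.get k).1 = ℓ then (w.get k).2 else 0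

/-- The set of labels occurring in `w`. -/
def wwLabels (w : List (L × Λ)) : Set L :=
  {ℓ | ∃ k : Fin w.length, (w.get k).1 = ℓ}

theorem wwKey {x y : List (L × Λ)} (hσ : wwSum x = wwSum y)
    (hS : wwLabels x = wwLabels y) (hsub : List.Sublist (wwFlag x) (wwFlag y)) :
    WeightedWordLE x y := by
  classical
  rw [List.sublist_iff_exists_fin_orderEmbedding_get_eq] at hsub
  obtain ⟨e0, he0⟩ := hsub
  have hlx : (wwFlag x).length = x.length := by simp [wwFlag]
  have hly : (wwFlag y).length = y.length := by simp [wwFlag]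
  set e : Fin x.length → Fin y.length :=
    fun k => Fin.cast hly (e0 (Fin.cast hlx.symm k)) with he_def
  have hmono : StrictMono e := by
    intro a b h
    have h2 : (Fin.cast hlx.symm a) < Fin.cast hlx.symm b := by
      rw [Fin.lt_def] at h ⊢; exact h
    have h3 := e0.strictMono h2
    rw [Fin.lt_def] at h3 ⊢
    exact h3
  have hget : ∀ k : Fin x.length,
      x.get k = y.get (e k) ∧ (WWIsLeader x k ↔ WWIsLeader y (e k)) := by
    intro k
    have h1 := he0 (Fin.cast hlx.symm k)
    unfold wwFlag at h1
    rw [List.get_ofFn, List.get_ofFn] at h1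
    exact ⟨congrArg Prod.fst h1, (congrArg Prod.snd h1).to_iff⟩
  -- key existence of the target index for each position of y
  have key : ∀ a : Fin y.length, ∃ k : Fin x.length,
      (y.get a).1 = (x.get k).1 ∧
      (e k = a ∨ (¬(∃ j, e j = a) ∧ WWIsLeader x k ∧ e k < a)) := by
    intro a
    by_cases hm : ∃ j, e j = a
    · obtain ⟨k, rfl⟩ := hm
      exact ⟨k, (congrArg Prod.fst (hget k).1).symm, Or.inl rfl⟩
    · have hmem : (y.get a).1 ∈ wwLabels x := by
        rw [hS]; exact ⟨a, rfl⟩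
      obtain ⟨k0, hk0⟩ := hmem
      obtain ⟨k, hk, hmin⟩ := (wellFounded_lt (α := Fin x.length)).has_min
        {k | (x.get k).1 = (y.get a).1} ⟨k0, hk0⟩
      have hlead : WWIsLeader x k := by
        intro j hj hlabel
        exact hmin j (by rw [Set.mem_setOf_eq, hlabel, hk]) hj
      have hleady : WWIsLeader y (e k) := (hget k).2.1 hlead
      have hlt : e k < a := by
        rcases lt_trichotomy (e k) a with h | h | h
        · exact h
        · exact absurd ⟨k, h⟩ hm
        · exact absurd ((congrArg Prod.fst (hget k).1).symm.trans hk).symm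
            (hleady a h)
      exact ⟨k, hk.symm, Or.inr ⟨hm, hlead, hlt⟩⟩
  choose f hf using key
  have hfe : ∀ k : Fin x.length, f (e k) = k := by
    intro k
    rcases (hf (e k)).2 with h | h
    · exact hmono.injective h
    · exact absurd ⟨k, rfl⟩ h.1
  refine ⟨f, fun k => ⟨e k, hfe k⟩, ?_, fun a => (hf a).1, ?_⟩
  · -- ordered surjection
    intro i j hij
    refine ⟨e i, hfe i, ?_⟩
    intro a ha
    rcases (hf a).2 with h | h
    · rw [ha] at h; rw [← h]; exact hmono hij
    · calc e i < e j := hmono hij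
        _ = e (f a) := by rw [ha]
        _ < a := h.2.2
  · -- weights
    intro k
    set M : Finset (Fin y.length) := Finset.univ.image e with hM_def
    have hMc : ∀ a, a ∈ M ↔ ∃ j, e j = a := by
      intro a; simp [hM_def]
    have hzero : ∀ ℓ, ∑ a ∈ Mᶜ, (if (y.get a).1 = ℓ then (y.get a).2 else 0) = 0 := by
      intro ℓ
      have h1 : ∑ a ∈ M, (if (y.get a).1 = ℓ then (y.get a).2 else 0) = wwSum x ℓ := by
        rw [hM_def, Finset.sum_image (fun a _ b _ h => hmono.injective h)]
        exact Finset.sum_congr rfl (fun k' _ => by rw [← (hget k').1])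
      have h2 := Finset.sum_add_sum_compl M
        (fun a => if (y.get a).1 = ℓ then (y.get a).2 else 0)
      rw [h1] at h2
      have h3 : (wwSum y ℓ : Λ) =
          ∑ a : Fin y.length, (if (y.get a).1 = ℓ then (y.get a).2 else 0) := by
        simp [wwSum]
      rw [← h3, ← hσ] at h2
      exact (add_eq_left).1 h2
    have hfib : Finset.univ.filter (fun a => f a = k)
        = insert (e k) (Mᶜ.filter fun a => f a = k) := by
      ext a
      constructor
      · intro ha
        rw [Finset.mem_filter] at ha
        rcases (hf a).2 with h | h
        · rw [Finset.mem_insert]; left; rw [ha.2] at h; exact h.symm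
        · rw [Finset.mem_insert]; right
          rw [Finset.mem_filter, Finset.mem_compl]
          exact ⟨fun hh => h.1 ((hMc a).1 hh), ha.2⟩
      · intro ha
        rw [Finset.mem_filter]
        rcases Finset.mem_insert.1 ha with rfl | ha
        · exact ⟨Finset.mem_univ _, hfe k⟩
        · exact ⟨Finset.mem_univ _, (Finset.mem_filter.1 ha).2⟩
    have hnotmem : e k ∉ Mᶜ.filter fun a => f a = k := by
      intro hcon
      have hc2 := (Finset.mem_filter.1 hcon).1
      rw [Finset.mem_compl] at hc2
      exact hc2 ((hMc (e k)).2 ⟨k, rfl⟩)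
    rw [hfib, Finset.sum_insert hnotmem]
    have hyk : (y.get (e k)).2 = (x.get k).2 := (congrArg Prod.snd (hget k).1).symm
    by_cases hL : WWIsLeader x k
    · have hUℓ : (Mᶜ.filter fun a => f a = k)
          = Mᶜ.filter fun a => (y.get a).1 = (x.get k).1 := by
        ext a
        rw [Finset.mem_filter, Finset.mem_filter, and_congr_right_iff]
        intro haM
        rw [Finset.mem_compl] at haM
        constructor
        · intro ha; rw [(hf a).1, ha]
        · intro ha
          have hum : ¬∃ j, e j = a := fun hh => haM ((hMc a).2 hh)
          rcases (hf a).2 with h | h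
          · exact absurd ⟨f a, h⟩ hum
          · have hlab : (x.get (f a)).1 = (x.get k).1 := by
              rw [← (hf a).1, ha]
            rcases lt_trichotomy (f a) k with hc | hc | hc
            · exact absurd hlab (hL (f a) hc)
            · exact hc
            · exact absurd hlab.symm (h.2.1 k hc)
      rw [hUℓ, Finset.sum_filter]
      rw [hzero ((x.get k).1), add_zero, hyk]
    · have hempty : (Mᶜ.filter fun a => f a = k) = ∅ := by
        rw [Finset.filter_eq_empty_iff]
        intro a haM
        rw [Finset.mem_compl] at haM
        have hum : ¬∃ j, e j = a := fun hh => haM ((hMc a).2 hh)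
        rcases (hf a).2 with h | h
        · exact fun _ => absurd ⟨f a, h⟩ hum
        · intro hfa; rw [hfa] at h; exact hL h.2.1
      rw [hempty, Finset.sum_empty, add_zero, hyk]

end Aux

/-- **Noetherianity of the weighted word order.** For `L` a finite set and `Λ` a finite
abelian group, the weighted subword order on words over `Σ = L × Λ` is a
well-quasi-order: every infinite sequence of words contains an increasing pair. -/
theorem stmt_14 {L Λ : Type*} [Fintype L] [AddCommGroup Λ] [Fintype Λ]
    (x : ℕ → List (L × Λ)) :
    ∃ i j : ℕ, i < j ∧ WeightedWordLE (x i) (x j) := by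
  classical
  haveI : Finite (Set L) := inferInstanceAs (Finite (L → Prop))
  set D := (L → Λ) × Set L
  set A := ((L × Λ) × Prop)
  let enc : List (L × Λ) → List (D ⊕ A) :=
    fun w => Sum.inl (wwSum w, wwLabels w) :: (wwFlag w).map Sum.inr
  have hpwo : (Set.univ : Set (D ⊕ A)).PartiallyWellOrderedOn (· = ·) :=
    Set.finite_univ.partiallyWellOrderedOn
  have hH := hpwo.partiallyWellOrderedOn_sublistForall₂ (· = ·)
  obtain ⟨m, n, hmn, hrel⟩ := hH.exists_lt (f := fun k => enc (x k)) (fun k a _ => Set.mem_univ a)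
  rw [List.sublistForall₂_iff] at hrel
  obtain ⟨l, hl1, hl2⟩ := hrel
  rw [List.forall₂_eq_eq_eq] at hl1
  subst hl1
  -- now : enc (x m) <+ enc (x n)
  refine ⟨m, n, hmn, ?_⟩
  rw [List.sublist_cons_iff] at hl2
  rcases hl2 with h | ⟨r, hr, hsub⟩
  · exfalso
    have := h.subset List.mem_cons_self
    simp at this
  · injection hr with h1 h2
    subst h2
    rw [List.sublist_map_iff] at hsub
    obtain ⟨l', hl', hmap⟩ := hsub
    have hfl : wwFlag (x m) = l' := List.map_injective_iff.2 Sum.inr_injective hmap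
    have h1' := Sum.inl.inj h1
    have hσ : wwSum (x m) = wwSum (x n) := congrArg Prod.fst h1'
    have hS : wwLabels (x m) = wwLabels (x n) := congrArg Prod.snd h1'
    exact wwKey hσ hS (hfl ▸ hl')
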